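/- Suppose glueing two simplicial d-polytopes P_1 # P_2 along facets F_1, F_2 identifies their boundaries minus the open facets. If a facet F'_1 of P_1 is at dual-graph distance δ_1 from F_1 and a facet F'_2 of P_2 is at distance δ_2 from F_2, then in the dual graph of the glued complex the distance from F'_1 to F'_2 is at least δ_1 + δ_2 − 1. Abstractly: if G is a graph formed from graphs G_1, G_2 by deleting a vertex f_1 from G_1 and f_2 from G_2 and adding edges only between former neighbors of f_1 and former neighbors of f_2, then d_G(x,y) ≥ d_{G_1}(x,f_1) + d_{G_2}(y,f_2) − 1 for x in G_1 and y in G_2. -/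
import Mathlib

private lemma aux_right {V₁ V₂ : Type*} (G₁ : SimpleGraph V₁) (G₂ : SimpleGraph V₂)
    (f₁ : V₁) (f₂ : V₂)
    (G : SimpleGraph ({x : V₁ // x ≠ f₁} ⊕ {y : V₂ // y ≠ f₂}))
    (hright : ∀ a b : {y : V₂ // y ≠ f₂},
      G.Adj (Sum.inr a) (Sum.inr b) ↔ G₂.Adj a b)
    (hcross : ∀ (a : {x : V₁ // x ≠ f₁}) (b : {y : V₂ // y ≠ f₂}),
      G.Adj (Sum.inl a) (Sum.inr b) → G₁.Adj a f₁ ∧ G₂.Adj b f₂) :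
    ∀ (n : ℕ) (u : {x : V₁ // x ≠ f₁} ⊕ {y : V₂ // y ≠ f₂})
      (y : {y : V₂ // y ≠ f₂}) (W : G.Walk u (Sum.inr y)), W.length = n →
      (∀ b, u = Sum.inr b → ∀ R : G₂.Walk (b : V₂) f₂,
        ∃ Q : G₂.Walk (y : V₂) f₂, Q.length ≤ W.length + R.length) ∧
      (∀ a, u = Sum.inl a → ∃ Q : G₂.Walk (y : V₂) f₂, Q.length ≤ W.length) := by
  intro n
  induction n using Nat.strong_induction_on with
  | _ n ih =>
    intro u y W hW
    constructor
    · rintro b rfl R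
      cases W with
      | nil => exact ⟨R, by simp⟩
      | @cons _ v _ e p =>
        simp only [SimpleGraph.Walk.length_cons] at hW
        cases v with
        | inl a' =>
          obtain ⟨Q, hQ⟩ := (ih p.length (by omega) _ y p rfl).2 a' rfl
          exact ⟨Q, by simp; omega⟩
        | inr b' =>
          have hadj : G₂.Adj (b : V₂) (b' : V₂) := (hright b b').mp e
          obtain ⟨Q, hQ⟩ := (ih p.length (by omega) _ y p rfl).1 b' rfl
            (SimpleGraph.Walk.cons hadj.symm R)
          exact ⟨Q, by simp at hQ ⊢; omega⟩
    · rintro a rfl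
      cases W with
      | @cons _ v _ e p =>
        simp only [SimpleGraph.Walk.length_cons] at hW
        cases v with
        | inl a' =>
          obtain ⟨Q, hQ⟩ := (ih p.length (by omega) _ y p rfl).2 a' rfl
          exact ⟨Q, by simp; omega⟩
        | inr b' =>
          have hadj : G₂.Adj (b' : V₂) f₂ := (hcross a b' e).2
          obtain ⟨Q, hQ⟩ := (ih p.length (by omega) _ y p rfl).1 b' rfl
            (SimpleGraph.Walk.cons hadj SimpleGraph.Walk.nil)
          exact ⟨Q, by simp at hQ ⊢; omega⟩

private lemma aux_main {V₁ V₂ : Type*} (G₁ : SimpleGraph V₁) (G₂ : SimpleGraph V₂)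
    (f₁ : V₁) (f₂ : V₂)
    (G : SimpleGraph ({x : V₁ // x ≠ f₁} ⊕ {y : V₂ // y ≠ f₂}))
    (hleft : ∀ a b : {x : V₁ // x ≠ f₁},
      G.Adj (Sum.inl a) (Sum.inl b) ↔ G₁.Adj a b)
    (hright : ∀ a b : {y : V₂ // y ≠ f₂},
      G.Adj (Sum.inr a) (Sum.inr b) ↔ G₂.Adj a b)
    (hcross : ∀ (a : {x : V₁ // x ≠ f₁}) (b : {y : V₂ // y ≠ f₂}),
      G.Adj (Sum.inl a) (Sum.inr b) → G₁.Adj a f₁ ∧ G₂.Adj b f₂) :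
    ∀ (n : ℕ) (x : {x : V₁ // x ≠ f₁}) (y : {y : V₂ // y ≠ f₂})
      (W : G.Walk (Sum.inl x) (Sum.inr y)), W.length = n →
      ∃ (P : G₁.Walk (x : V₁) f₁) (Q : G₂.Walk (y : V₂) f₂),
        P.length + Q.length ≤ W.length + 1 := by
  intro n
  induction n using Nat.strong_induction_on with
  | _ n ih =>
    intro x y W hW
    cases W with
    | @cons _ v _ e p =>
      simp only [SimpleGraph.Walk.length_cons] at hW
      cases v with
      | inl a' =>
        obtain ⟨P, Q, hPQ⟩ := ih p.length (by omega) a' y p rfl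
        exact ⟨SimpleGraph.Walk.cons ((hleft x a').mp e) P, Q, by simp at hPQ ⊢; omega⟩
      | inr b' =>
        obtain ⟨h1, h2⟩ := hcross x b' e
        obtain ⟨Q, hQ⟩ := (aux_right G₁ G₂ f₁ f₂ G hright hcross p.length _ y p rfl).1
          b' rfl (SimpleGraph.Walk.cons h2 SimpleGraph.Walk.nil)
        exact ⟨SimpleGraph.Walk.cons h1 SimpleGraph.Walk.nil, Q, by simp at hQ ⊢; omega⟩

/-- The abstract dual-graph version of glueing two simplicial polytopes along a
facet: let `G` be a graph on the disjoint union of `G₁` minus the vertex `f₁` and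
`G₂` minus the vertex `f₂`, which restricts to `G₁` (resp. `G₂`) on each part and
whose crossing edges only join former neighbors of `f₁` to former neighbors of
`f₂`.  Then for `x` in the first part and `y` in the second,
`d_G(x, y) ≥ d_{G₁}(x, f₁) + d_{G₂}(y, f₂) − 1`. -/
theorem stmt_15 {V₁ V₂ : Type*} (G₁ : SimpleGraph V₁) (G₂ : SimpleGraph V₂)
    (f₁ : V₁) (f₂ : V₂)
    (G : SimpleGraph ({x : V₁ // x ≠ f₁} ⊕ {y : V₂ // y ≠ f₂}))
    (hleft : ∀ a b : {x : V₁ // x ≠ f₁},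
      G.Adj (Sum.inl a) (Sum.inl b) ↔ G₁.Adj a b)
    (hright : ∀ a b : {y : V₂ // y ≠ f₂},
      G.Adj (Sum.inr a) (Sum.inr b) ↔ G₂.Adj a b)
    (hcross : ∀ (a : {x : V₁ // x ≠ f₁}) (b : {y : V₂ // y ≠ f₂}),
      G.Adj (Sum.inl a) (Sum.inr b) → G₁.Adj a f₁ ∧ G₂.Adj b f₂) :
    ∀ (x : {x : V₁ // x ≠ f₁}) (y : {y : V₂ // y ≠ f₂}),
      G.Reachable (Sum.inl x) (Sum.inr y) →
      G₁.dist x f₁ + G₂.dist y f₂ ≤ G.dist (Sum.inl x) (Sum.inr y) + 1 := by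
  intro x y h
  obtain ⟨W, hW⟩ := h.exists_walk_length_eq_dist
  obtain ⟨P, Q, hPQ⟩ := aux_main G₁ G₂ f₁ f₂ G hleft hright hcross W.length x y W rfl
  have h1 := SimpleGraph.dist_le P
  have h2 := SimpleGraph.dist_le Q
  omega
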